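/- Let V and W be real Banach spaces, let n ≥ 1, and let f : W → L(V,W) be (n+1)-times Fréchet differentiable with all derivatives of order ≤ n+1 bounded on every bounded set. For β ≥ 1 define Ψ_β : W × W → L(V,W) by Ψ_β(y,z) := β (f(y) − f(y − β^{−1} z)). Then: (i) for every R > 0 and every (y,z) with ‖y‖ + ‖z‖ ≤ R, ‖Ψ_β(y,z)‖ ≤ (1 + R) M(f;1,R); (ii) for every k with 1 ≤ k ≤ n there exists a constant c_k > 0, independent of β ≥ 1 and of R > 0, such that ‖D^k Ψ_β(y,z)‖ ≤ c_k (1 + R) M(f;k+1,R) whenever ‖y‖ + ‖z‖ ≤ R, where D^k denotes the k-th Fréchet derivative of Ψ_β on the Banach space W × W (with norm ‖(y,z)‖ = ‖y‖ + ‖z‖). -/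

import Mathlib

set_option linter.unusedSectionVars false
set_option maxHeartbeats 1000000


/-!
STATEMENT 11: estimates for `Ψ_β(y,z) = β (f(y) − f(y − β⁻¹ z))` and its Fréchet derivatives
on `W × W` equipped with the sum norm (`WithLp 1 (W × W)`).
-/

universe u v

/-- `M(f;k,R) = max_{0 ≤ j ≤ k} sup{‖D^j f(x)‖ : ‖x‖ ≤ R}`. -/
noncomputable def Mbound {W : Type u} {F : Type v}
    [NormedAddCommGroup W] [NormedSpace ℝ W] [NormedAddCommGroup F] [NormedSpace ℝ F]
    (f : W → F) (k : ℕ) (R : ℝ) : ℝ :=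
  sSup {a : ℝ | ∃ j ≤ k, ∃ x : W, ‖x‖ ≤ R ∧ a = ‖iteratedFDeriv ℝ j f x‖}

/-- `Ψ_β : W × W → L(V,W)`, `Ψ_β(y,z) = β (f(y) − f(y − β⁻¹ z))`, viewed as a map on
`W × W` with the norm `‖(y,z)‖ = ‖y‖ + ‖z‖` (the `L¹` product norm). -/
noncomputable def Psi {V : Type u} {W : Type v}
    [NormedAddCommGroup V] [NormedSpace ℝ V] [NormedAddCommGroup W] [NormedSpace ℝ W]
    (f : W → V →L[ℝ] W) (β : ℝ) (x : WithLp 1 (W × W)) : V →L[ℝ] W :=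
  β • (f (WithLp.equiv 1 (W × W) x).1
    - f ((WithLp.equiv 1 (W × W) x).1 - β⁻¹ • (WithLp.equiv 1 (W × W) x).2))

section aux
variable {W : Type*} [NormedAddCommGroup W] [NormedSpace ℝ W]
variable {E : Type*} [NormedAddCommGroup E] [NormedSpace ℝ E]

noncomputable def projFst : WithLp 1 (W × W) →L[ℝ] W :=
  (ContinuousLinearMap.fst ℝ W W).comp
    (WithLp.prodContinuousLinearEquiv 1 ℝ W W : WithLp 1 (W × W) →L[ℝ] W × W)

noncomputable def projSnd : WithLp 1 (W × W) →L[ℝ] W :=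
  (ContinuousLinearMap.snd ℝ W W).comp
    (WithLp.prodContinuousLinearEquiv 1 ℝ W W : WithLp 1 (W × W) →L[ℝ] W × W)

lemma withlp_norm (x : WithLp 1 (W × W)) :
    ‖x‖ = ‖(WithLp.equiv 1 (W × W) x).1‖ + ‖(WithLp.equiv 1 (W × W) x).2‖ := by
  rw [WithLp.prod_norm_eq_add (by norm_num)]
  norm_num

lemma projFst_apply (x : WithLp 1 (W × W)) : projFst x = (WithLp.equiv 1 (W × W) x).1 := rfl
lemma projSnd_apply (x : WithLp 1 (W × W)) : projSnd x = (WithLp.equiv 1 (W × W) x).2 := rfl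

lemma norm_projFst_apply (x : WithLp 1 (W × W)) : ‖projFst x‖ ≤ ‖x‖ := by
  rw [projFst_apply, withlp_norm]
  nlinarith [norm_nonneg (WithLp.equiv 1 (W × W) x).2]

lemma norm_projSnd_apply (x : WithLp 1 (W × W)) : ‖projSnd x‖ ≤ ‖x‖ := by
  rw [projSnd_apply, withlp_norm]
  nlinarith [norm_nonneg (WithLp.equiv 1 (W × W) x).1]

lemma norm_Lmap_apply {β : ℝ} (hβ : 1 ≤ β) (x : WithLp 1 (W × W)) :
    ‖(projFst - β⁻¹ • projSnd : WithLp 1 (W × W) →L[ℝ] W) x‖ ≤ ‖x‖ := by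
  have hβ0 : (0:ℝ) < β := lt_of_lt_of_le one_pos hβ
  have hβi : β⁻¹ ≤ 1 := by
    rw [inv_le_one_iff₀]; right; exact hβ
  simp only [ContinuousLinearMap.sub_apply, ContinuousLinearMap.smul_apply]
  calc ‖projFst x - β⁻¹ • projSnd x‖ ≤ ‖projFst x‖ + ‖β⁻¹ • projSnd x‖ := norm_sub_le _ _
    _ ≤ ‖projFst x‖ + ‖projSnd x‖ := by
        rw [norm_smul, Real.norm_eq_abs, abs_of_pos (by positivity)]
        nlinarith [norm_nonneg (projSnd x)]
    _ ≤ ‖x‖ := by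
        rw [projFst_apply, projSnd_apply, withlp_norm]

lemma norm_Lmap_le {β : ℝ} (hβ : 1 ≤ β) :
    ‖(projFst - β⁻¹ • projSnd : WithLp 1 (W × W) →L[ℝ] W)‖ ≤ 1 :=
  ContinuousLinearMap.opNorm_le_bound _ zero_le_one fun x => by
    rw [one_mul]; exact norm_Lmap_apply hβ x

lemma norm_projFst_le : ‖(projFst : WithLp 1 (W × W) →L[ℝ] W)‖ ≤ 1 :=
  ContinuousLinearMap.opNorm_le_bound _ zero_le_one fun x => by
    rw [one_mul]; exact norm_projFst_apply x

lemma norm_projSnd_le : ‖(projSnd : WithLp 1 (W × W) →L[ℝ] W)‖ ≤ 1 :=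
  ContinuousLinearMap.opNorm_le_bound _ zero_le_one fun x => by
    rw [one_mul]; exact norm_projSnd_apply x

end aux

theorem psi_iter_bound {W : Type v} [NormedAddCommGroup W] [NormedSpace ℝ W] :
    ∀ (k : ℕ) (E : Type (max u v)) [NormedAddCommGroup E] [NormedSpace ℝ E]
      (g : W → E), ContDiff ℝ (k + 1 : ℕ) g →
    ∀ β : ℝ, 1 ≤ β → ∀ R B : ℝ, 0 ≤ B →
    (∀ j, 1 ≤ j → j ≤ k + 1 → ∀ w : W, ‖w‖ ≤ R → ‖iteratedFDeriv ℝ j g w‖ ≤ B) →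
    ∀ x : WithLp 1 (W × W), ‖x‖ ≤ R →
    ‖iteratedFDeriv ℝ k
      (fun y => β • (g (projFst y) - g ((projFst - β⁻¹ • projSnd : _ →L[ℝ] _) y))) x‖
      ≤ (R + k) * B := by
  intro k
  induction k with
  | zero =>
    intro E _ _ g hg β hβ R B hB0 hB x hx
    have hβ0 : (0:ℝ) < β := lt_of_lt_of_le one_pos hβ
    rw [norm_iteratedFDeriv_zero]
    set y := projFst x with hy_def
    set w := (projFst - β⁻¹ • projSnd : WithLp 1 (W × W) →L[ℝ] W) x with hw_def
    have hy : ‖y‖ ≤ R := (norm_projFst_apply x).trans hx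
    have hw : ‖w‖ ≤ R := (norm_Lmap_apply hβ x).trans hx
    have hdiff : ∀ u ∈ Metric.closedBall (0:W) R,
        HasFDerivWithinAt g (fderiv ℝ g u) (Metric.closedBall (0:W) R) u := fun u _ =>
      ((hg.differentiable (by simp)) u
        ).hasFDerivAt.hasFDerivWithinAt
    have hbound : ∀ u ∈ Metric.closedBall (0:W) R, ‖fderiv ℝ g u‖ ≤ B := by
      intro u hu
      have h1 : ‖fderiv ℝ g u‖ = ‖iteratedFDeriv ℝ 1 g u‖ := by
        rw [← norm_iteratedFDeriv_fderiv, norm_iteratedFDeriv_zero]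
      rw [h1]
      exact hB 1 le_rfl le_rfl u (mem_closedBall_zero_iff.1 hu)
    have key : ‖g y - g w‖ ≤ B * ‖y - w‖ :=
      (convex_closedBall (0:W) R).norm_image_sub_le_of_norm_hasFDerivWithin_le
        hdiff hbound (mem_closedBall_zero_iff.2 hw) (mem_closedBall_zero_iff.2 hy)
    have hyw : y - w = β⁻¹ • projSnd x := by
      rw [hy_def, hw_def]
      simp [ContinuousLinearMap.sub_apply, ContinuousLinearMap.smul_apply]
    have hz : ‖projSnd x‖ ≤ R := (norm_projSnd_apply x).trans hx
    rw [norm_smul, Real.norm_eq_abs, abs_of_pos hβ0]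
    have : ‖y - w‖ = β⁻¹ * ‖projSnd x‖ := by
      rw [hyw, norm_smul, Real.norm_eq_abs, abs_of_pos (by positivity)]
    calc β * ‖g y - g w‖ ≤ β * (B * (β⁻¹ * ‖projSnd x‖)) := by
          rw [← this]; exact mul_le_mul_of_nonneg_left key (le_of_lt hβ0)
      _ = B * ‖projSnd x‖ := by field_simp
      _ ≤ (R + (0:ℕ)) * B := by push_cast; nlinarith
  | succ k IH =>
    intro E _ _ g hg β hβ R B hB0 hB x hx
    have hβ0 : (0:ℝ) < β := lt_of_lt_of_le one_pos hβ
    set P : WithLp 1 (W × W) →L[ℝ] W := projFst with hP_def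
    set Q : WithLp 1 (W × W) →L[ℝ] W := projSnd with hQ_def
    set L : WithLp 1 (W × W) →L[ℝ] W := P - β⁻¹ • Q with hL_def
    set g' := fderiv ℝ g with hg'_def
    have hg' : ContDiff ℝ (k + 1 : ℕ) g' := by
      apply hg.fderiv_right
      exact_mod_cast le_rfl
    set Φ' : WithLp 1 (W × W) → (W →L[ℝ] E) :=
      fun y => β • (g' (P y) - g' (L y)) with hΦ'_def
    set preP : (W →L[ℝ] E) →L[ℝ] (WithLp 1 (W × W) →L[ℝ] E) :=
      (ContinuousLinearMap.compL ℝ (WithLp 1 (W × W)) W E).flip P with hpreP_def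
    set preQ : (W →L[ℝ] E) →L[ℝ] (WithLp 1 (W × W) →L[ℝ] E) :=
      (ContinuousLinearMap.compL ℝ (WithLp 1 (W × W)) W E).flip Q with hpreQ_def
    have hpreP_apply : ∀ S : W →L[ℝ] E, preP S = S.comp P := fun S => rfl
    have hpreQ_apply : ∀ S : W →L[ℝ] E, preQ S = S.comp Q := fun S => rfl
    have hpreP_norm : ‖preP‖ ≤ 1 := by
      refine ContinuousLinearMap.opNorm_le_bound _ zero_le_one fun S => ?_
      rw [one_mul, hpreP_apply]
      calc ‖S.comp P‖ ≤ ‖S‖ * ‖P‖ :=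
            ContinuousLinearMap.opNorm_comp_le _ _
        _ ≤ ‖S‖ * 1 := mul_le_mul_of_nonneg_left (hP_def ▸ norm_projFst_le) (norm_nonneg S)
        _ = ‖S‖ := mul_one _
    have hpreQ_norm : ‖preQ‖ ≤ 1 := by
      refine ContinuousLinearMap.opNorm_le_bound _ zero_le_one fun S => ?_
      rw [one_mul, hpreQ_apply]
      calc ‖S.comp Q‖ ≤ ‖S‖ * ‖Q‖ :=
            ContinuousLinearMap.opNorm_comp_le _ _
        _ ≤ ‖S‖ * 1 := mul_le_mul_of_nonneg_left (hQ_def ▸ norm_projSnd_le) (norm_nonneg S)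
        _ = ‖S‖ := mul_one _
    have hgd : Differentiable ℝ g :=
      hg.differentiable (by simp)
    have hΦeq : (fderiv ℝ (fun y => β • (g (P y) - g (L y)))) =
        (⇑preP ∘ Φ') + (⇑preQ ∘ (g' ∘ ⇑L)) := by
      funext y
      have h1 : HasFDerivAt (fun y : WithLp 1 (W × W) => g (P y))
          ((g' (P y)).comp P) y :=
        ((hgd (projFst y)).hasFDerivAt).comp y P.hasFDerivAt
      have h2 : HasFDerivAt (fun y : WithLp 1 (W × W) => g (L y))
          ((g' (L y)).comp L) y :=
        ((hgd (L y)).hasFDerivAt).comp y L.hasFDerivAt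
      have h3 : HasFDerivAt (fun y => β • (g (P y) - g (L y)))
          (β • ((g' (P y)).comp P - (g' (L y)).comp L)) y :=
        (h1.sub h2).const_smul β
      rw [h3.fderiv]
      ext v
      simp only [hΦ'_def, hpreP_apply, hpreQ_apply, Pi.add_apply, Function.comp_apply,
        ContinuousLinearMap.smul_apply, ContinuousLinearMap.comp_apply,
        ContinuousLinearMap.sub_apply, ContinuousLinearMap.add_apply, hL_def,
        map_sub, map_smul]
      rw [smul_sub, smul_sub, smul_smul, mul_inv_cancel₀ hβ0.ne', one_smul]
      module
    have hgd' : ContDiff ℝ (k : ℕ) g' := hg'.of_le (by exact_mod_cast Nat.le_succ k)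
    have hΦ'cd : ContDiff ℝ (k : ℕ) Φ' :=
      ((hgd'.comp P.contDiff).sub (hgd'.comp L.contDiff)).const_smul β
    have hAcd : ContDiff ℝ (k : ℕ) (⇑preP ∘ Φ') := preP.contDiff.comp hΦ'cd
    have hBcd : ContDiff ℝ (k : ℕ) (⇑preQ ∘ (g' ∘ ⇑L)) :=
      preQ.contDiff.comp ((hgd'.comp L.contDiff))
    have hsplit : iteratedFDeriv ℝ k ((⇑preP ∘ Φ') + (⇑preQ ∘ (g' ∘ ⇑L))) x
        = iteratedFDeriv ℝ k (⇑preP ∘ Φ') x + iteratedFDeriv ℝ k (⇑preQ ∘ (g' ∘ ⇑L)) x :=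
      iteratedFDeriv_add_apply hAcd.contDiffAt hBcd.contDiffAt
    have hA1 : iteratedFDeriv ℝ k (⇑preP ∘ Φ') x
        = preP.compContinuousMultilinearMap (iteratedFDeriv ℝ k Φ' x) :=
      preP.iteratedFDeriv_comp_left (x := x) hΦ'cd.contDiffAt le_rfl
    have hIH : ‖iteratedFDeriv ℝ k Φ' x‖ ≤ (R + k) * B := by
      refine IH (W →L[ℝ] E) g' hg' β hβ R B hB0 ?_ x hx
      intro j hj1 hj2 w hw
      rw [hg'_def, norm_iteratedFDeriv_fderiv]
      exact hB (j + 1) (by omega) (by omega) w hw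
    have hA2 : ‖iteratedFDeriv ℝ k (⇑preP ∘ Φ') x‖ ≤ (R + k) * B := by
      rw [hA1]
      calc ‖preP.compContinuousMultilinearMap (iteratedFDeriv ℝ k Φ' x)‖
          ≤ ‖preP‖ * ‖iteratedFDeriv ℝ k Φ' x‖ :=
            ContinuousLinearMap.norm_compContinuousMultilinearMap_le _ _
        _ ≤ 1 * ‖iteratedFDeriv ℝ k Φ' x‖ :=
            mul_le_mul_of_nonneg_right hpreP_norm (norm_nonneg _)
        _ = ‖iteratedFDeriv ℝ k Φ' x‖ := one_mul _
        _ ≤ (R + k) * B := hIH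
    have hB1 : iteratedFDeriv ℝ k (⇑preQ ∘ (g' ∘ ⇑L)) x
        = preQ.compContinuousMultilinearMap (iteratedFDeriv ℝ k (g' ∘ ⇑L) x) :=
      preQ.iteratedFDeriv_comp_left (x := x) (hgd'.comp L.contDiff).contDiffAt le_rfl
    have hB2 : iteratedFDeriv ℝ k (g' ∘ ⇑L) x
        = (iteratedFDeriv ℝ k g' (L x)).compContinuousLinearMap (fun _ => L) :=
      L.iteratedFDeriv_comp_right hgd' x le_rfl
    have hLx : ‖L x‖ ≤ R := (hL_def ▸ hP_def ▸ hQ_def ▸ norm_Lmap_apply hβ x).trans hx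
    have hgk : ‖iteratedFDeriv ℝ k g' (L x)‖ ≤ B := by
      rw [hg'_def, norm_iteratedFDeriv_fderiv]
      exact hB (k + 1) (by omega) (by omega) _ hLx
    have hBbd : ‖iteratedFDeriv ℝ k (⇑preQ ∘ (g' ∘ ⇑L)) x‖ ≤ B := by
      have h4 : ‖iteratedFDeriv ℝ k (g' ∘ ⇑L) x‖ ≤ B := by
        rw [hB2]
        have hprod : (∏ _i : Fin k, ‖L‖) ≤ 1 := by
          rw [Finset.prod_const]
          exact pow_le_one₀ (norm_nonneg L) (hL_def ▸ hP_def ▸ hQ_def ▸ norm_Lmap_le hβ)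
        calc ‖(iteratedFDeriv ℝ k g' (L x)).compContinuousLinearMap fun _ => L‖
            ≤ ‖iteratedFDeriv ℝ k g' (L x)‖ * ∏ _i : Fin k, ‖L‖ :=
              ContinuousMultilinearMap.norm_compContinuousLinearMap_le _ _
          _ ≤ ‖iteratedFDeriv ℝ k g' (L x)‖ * 1 :=
              mul_le_mul_of_nonneg_left hprod (norm_nonneg _)
          _ = ‖iteratedFDeriv ℝ k g' (L x)‖ := mul_one _
          _ ≤ B := hgk
      rw [hB1]
      calc ‖preQ.compContinuousMultilinearMap (iteratedFDeriv ℝ k (g' ∘ ⇑L) x)‖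
          ≤ ‖preQ‖ * ‖iteratedFDeriv ℝ k (g' ∘ ⇑L) x‖ :=
            ContinuousLinearMap.norm_compContinuousMultilinearMap_le _ _
        _ ≤ 1 * ‖iteratedFDeriv ℝ k (g' ∘ ⇑L) x‖ :=
            mul_le_mul_of_nonneg_right hpreQ_norm (norm_nonneg _)
        _ = ‖iteratedFDeriv ℝ k (g' ∘ ⇑L) x‖ := one_mul _
        _ ≤ B := h4
    calc ‖iteratedFDeriv ℝ (k + 1) (fun y => β • (g (P y) - g (L y))) x‖
        = ‖iteratedFDeriv ℝ k (fderiv ℝ (fun y => β • (g (P y) - g (L y)))) x‖ :=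
          (norm_iteratedFDeriv_fderiv).symm
      _ = ‖iteratedFDeriv ℝ k (⇑preP ∘ Φ') x + iteratedFDeriv ℝ k (⇑preQ ∘ (g' ∘ ⇑L)) x‖ := by
          rw [hΦeq, hsplit]
      _ ≤ (R + k) * B + B := le_trans (norm_add_le _ _) (add_le_add hA2 hBbd)
      _ = (R + ((k : ℕ) + 1 : ℕ)) * B := by push_cast; ring

lemma mbound_spec {W : Type u} {F : Type v} [NormedAddCommGroup W] [NormedSpace ℝ W]
    [NormedAddCommGroup F] [NormedSpace ℝ F]
    (f : W → F) (m : ℕ) (R : ℝ) (hR : 0 < R)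
    (h : ∀ j ≤ m, ∃ B : ℝ, ∀ x : W, ‖x‖ ≤ R → ‖iteratedFDeriv ℝ j f x‖ ≤ B) :
    0 ≤ Mbound f m R ∧
      ∀ j ≤ m, ∀ x : W, ‖x‖ ≤ R → ‖iteratedFDeriv ℝ j f x‖ ≤ Mbound f m R := by
  classical
  choose B hB using h
  have hM : Mbound f m R
      = sSup {a : ℝ | ∃ j ≤ m, ∃ x : W, ‖x‖ ≤ R ∧ a = ‖iteratedFDeriv ℝ j f x‖} := rfl
  have hbdd : BddAbove {a : ℝ | ∃ j ≤ m, ∃ x : W, ‖x‖ ≤ R ∧ a = ‖iteratedFDeriv ℝ j f x‖} := by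
    refine ⟨(Finset.range (m + 1)).sup' (by simp) (fun j => if h : j ≤ m then B j h else 0), ?_⟩
    rintro a ⟨j, hj, x, hx, rfl⟩
    have h1 : ‖iteratedFDeriv ℝ j f x‖ ≤ (if h : j ≤ m then B j h else 0) := by
      rw [dif_pos hj]; exact hB j hj x hx
    exact h1.trans (Finset.le_sup' (fun j => if h : j ≤ m then B j h else 0)
      (Finset.mem_range.2 (Nat.lt_succ_of_le hj)))
  have hmem : (‖iteratedFDeriv ℝ 0 f 0‖ : ℝ)
      ∈ {a : ℝ | ∃ j ≤ m, ∃ x : W, ‖x‖ ≤ R ∧ a = ‖iteratedFDeriv ℝ j f x‖} :=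
    ⟨0, by omega, 0, by simp [hR.le], rfl⟩
  constructor
  · rw [hM]
    exact le_trans (norm_nonneg _) (le_csSup hbdd hmem)
  · intro j hj x hx
    rw [hM]
    exact le_csSup hbdd ⟨j, hj, x, hx, rfl⟩

/-- Bounds for `Ψ_β` and its Fréchet derivatives, uniformly in `β ≥ 1`. -/
theorem statement11 (V : Type u) (W : Type v)
    [NormedAddCommGroup V] [NormedSpace ℝ V] [CompleteSpace V]
    [NormedAddCommGroup W] [NormedSpace ℝ W] [CompleteSpace W]
    (n : ℕ) (hn : 1 ≤ n) (f : W → V →L[ℝ] W)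
    (hf : ContDiff ℝ (n + 1 : ℕ) f)
    (hbdd : ∀ j ≤ n + 1, ∀ R > (0 : ℝ), ∃ B : ℝ, ∀ x : W, ‖x‖ ≤ R →
      ‖iteratedFDeriv ℝ j f x‖ ≤ B) :
    -- (i)
    (∀ β : ℝ, 1 ≤ β → ∀ R > (0 : ℝ), ∀ y z : W, ‖y‖ + ‖z‖ ≤ R →
      ‖Psi f β ((WithLp.equiv 1 (W × W)).symm (y, z))‖ ≤ (1 + R) * Mbound f 1 R) ∧
    -- (ii)
    (∀ k : ℕ, 1 ≤ k → k ≤ n →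
      ∃ c : ℝ, 0 < c ∧ ∀ β : ℝ, 1 ≤ β → ∀ R > (0 : ℝ),
        ∀ x : WithLp 1 (W × W), ‖x‖ ≤ R →
          ‖iteratedFDeriv ℝ k (Psi f β) x‖ ≤ c * (1 + R) * Mbound f (k + 1) R) := by
  have hPsi : ∀ β : ℝ, Psi f β =
      fun y => β • (f (projFst y) - f ((projFst - β⁻¹ • projSnd : _ →L[ℝ] _) y)) :=
    fun β => rfl
  constructor
  · intro β hβ R hR y z hyz
    obtain ⟨hM0, hMle⟩ := mbound_spec f 1 R hR (fun j (hj : j ≤ 1) => hbdd j (by omega) R hR)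
    have hx : ‖(WithLp.equiv 1 (W × W)).symm (y, z)‖ ≤ R := by
      rw [withlp_norm]; simpa using hyz
    have h := psi_iter_bound 0 (V →L[ℝ] W) f
      (hf.of_le (by exact_mod_cast Nat.succ_le_succ (Nat.zero_le n))) β hβ R
      (Mbound f 1 R) hM0 (fun j hj1 hj2 w hw => hMle j (by omega) w hw)
      ((WithLp.equiv 1 (W × W)).symm (y, z)) hx
    rw [norm_iteratedFDeriv_zero] at h
    rw [hPsi β]
    refine h.trans ?_
    push_cast
    nlinarith
  · intro k hk1 hkn
    refine ⟨k, by exact_mod_cast hk1, ?_⟩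
    intro β hβ R hR x hx
    obtain ⟨hM0, hMle⟩ := mbound_spec f (k + 1) R hR (fun j (hj : j ≤ k + 1) => hbdd j (by omega) R hR)
    have h := psi_iter_bound k (V →L[ℝ] W) f
      (hf.of_le (by exact_mod_cast Nat.succ_le_succ hkn)) β hβ R
      (Mbound f (k + 1) R) hM0 (fun j hj1 hj2 w hw => hMle j hj2 w hw) x hx
    rw [hPsi β]
    refine h.trans ?_
    have hk1' : (1 : ℝ) ≤ k := by exact_mod_cast hk1
    nlinarith [mul_nonneg (mul_nonneg (sub_nonneg.2 hk1') hR.le) hM0]
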